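/- Let K ≥ 2 and M ≥ 2 be integers, let X be a {0,1}-valued M²×(KM) incidence matrix of a TD(K,M), i.e. X·1 = K·1 and XᵀX = M·I + (J_K − I_K) ⊗ J_M, and let H be an M×M complex Hadamard matrix whose first row is all ones; let F be the (M−1)×M matrix obtained by deleting the first row of H. Then the K(M−1)×M² matrix Φ = (I_K ⊗ F)·Xᵀ has all entries of modulus one and satisfies Φ Φ* = M²·I, Φ*Φ = M·X Xᵀ − K·J, and Φ·1 = 0. In particular, the columns of Φ form a flat two-distance tight frame for ℂ^{K(M−1)}. -/

import Mathlib

open Matrix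

open Kronecker in
private lemma kron_conjT {a b c d : ℕ} (A : Matrix (Fin a) (Fin b) ℂ)
    (B : Matrix (Fin c) (Fin d) ℂ) : (A ⊗ₖ B)ᴴ = Aᴴ ⊗ₖ Bᴴ := by
  ext ⟨i, j⟩ ⟨k, l⟩
  simp [Matrix.conjTranspose_apply, mul_comm]

private lemma sum01_eq_card {ι : Type*} [Fintype ι] [DecidableEq ι] (t : ι → ℂ)
    (h : ∀ i, t i = 0 ∨ t i = 1) :
    ∑ i, t i = ((Finset.univ.filter (fun i => t i = 1)).card : ℂ) := by
  classical
  rw [Finset.card_filter]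
  push_cast
  refine Finset.sum_congr rfl fun i _ => ?_
  rcases h i with h' | h' <;> simp [h']

/-- Flat two-distance tight frames from transversal designs.  Let `X` be a `{0,1}`
incidence matrix of a `TD(K,M)`, let `H` be an `M × M` complex Hadamard matrix whose first
row is all ones, and let `F` be `H` with its first row deleted.  Then
`Φ = (I_K ⊗ F) Xᵀ` is flat (all entries unimodular) and satisfies `Φ Φᴴ = M²·I`,
`Φᴴ Φ = M·X Xᵀ - K·J`, and `Φ·1 = 0`. -/
theorem td_flat_tdtf (K M : ℕ) (hK : 2 ≤ K) (hM : 2 ≤ M)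
    (X : Matrix (Fin (M * M)) (Fin K × Fin M) ℂ)
    (hX01 : ∀ b v, X b v = 0 ∨ X b v = 1)
    (hXrow : ∀ b, ∑ v, X b v = (K : ℂ))
    (hXgram : Xᵀ * X = (M : ℂ) • (1 : Matrix (Fin K × Fin M) (Fin K × Fin M) ℂ) +
      Matrix.kroneckerMap (· * ·)
        (Matrix.of (fun _ _ => (1 : ℂ)) - (1 : Matrix (Fin K) (Fin K) ℂ))
        (Matrix.of (fun _ _ => (1 : ℂ)) : Matrix (Fin M) (Fin M) ℂ))
    (H : Matrix (Fin M) (Fin M) ℂ)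
    (hHflat : ∀ i j, ‖H i j‖ = 1)
    (hHorth : Hᴴ * H = (M : ℂ) • (1 : Matrix (Fin M) (Fin M) ℂ))
    (hHrow : ∀ j, H ⟨0, by omega⟩ j = 1)
    (F : Matrix (Fin (M - 1)) (Fin M) ℂ)
    (hF : ∀ (i : Fin (M - 1)) (j : Fin M), F i j = H (Fin.cast (by omega) i.succ) j)
    (Φ : Matrix (Fin K × Fin (M - 1)) (Fin (M * M)) ℂ)
    (hΦ : Φ = Matrix.kroneckerMap (· * ·) (1 : Matrix (Fin K) (Fin K) ℂ) F * Xᵀ) :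
    (∀ p q, ‖Φ p q‖ = 1) ∧
    Φ * Φᴴ = ((M : ℂ) ^ 2) • (1 : Matrix (Fin K × Fin (M - 1)) (Fin K × Fin (M - 1)) ℂ) ∧
    Φᴴ * Φ = (M : ℂ) • (X * Xᵀ) - (K : ℂ) • (Matrix.of (fun _ _ => (1 : ℂ))) ∧
    Φ *ᵥ (fun _ => 1) = 0 := by
  classical
  have hM0 : (M : ℂ) ≠ 0 := Nat.cast_ne_zero.mpr (by omega)
  have hm1 : M - 1 + 1 = M := by omega
  set z : Fin M := ⟨0, by omega⟩ with hz
  -- H * Hᴴ = M • 1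
  have hHH : H * Hᴴ = (M : ℂ) • 1 := by
    have h1 : ((M : ℂ)⁻¹ • Hᴴ) * H = 1 := by
      rw [Matrix.smul_mul, hHorth, smul_smul, inv_mul_cancel₀ hM0, one_smul]
    have h2 : H * ((M : ℂ)⁻¹ • Hᴴ) = 1 := mul_eq_one_comm.mp h1
    calc H * Hᴴ = (M : ℂ) • (H * ((M : ℂ)⁻¹ • Hᴴ)) := by
          rw [Matrix.mul_smul, smul_smul, mul_inv_cancel₀ hM0, one_smul]
      _ = (M : ℂ) • 1 := by rw [h2]
  have hcast_ne : ∀ i : Fin (M - 1), Fin.cast hm1 i.succ ≠ z := by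
    intro i h
    have : (i : ℕ) + 1 = 0 := congrArg Fin.val h
    omega
  -- row sums of F vanish
  have hFrow : ∀ i : Fin (M - 1), ∑ j, F i j = 0 := by
    intro i
    have h := congrFun (congrFun hHH (Fin.cast hm1 i.succ)) z
    rw [Matrix.mul_apply] at h
    simp only [Matrix.conjTranspose_apply, Matrix.smul_apply, Matrix.one_apply,
      if_neg (hcast_ne i), smul_zero] at h
    calc ∑ j, F i j = ∑ j, H (Fin.cast hm1 i.succ) j * star (H z j) := by
          refine Finset.sum_congr rfl fun j _ => ?_
          rw [hF, hz]
          rw [hHrow j]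
          simp
      _ = 0 := h
  -- F * Fᴴ = M • 1
  have hFFH : F * Fᴴ = (M : ℂ) • 1 := by
    ext i i'
    have h := congrFun (congrFun hHH (Fin.cast hm1 i.succ)) (Fin.cast hm1 i'.succ)
    rw [Matrix.mul_apply] at h
    have hiff : (Fin.cast hm1 i.succ = Fin.cast hm1 i'.succ) ↔ i = i' := by
      constructor
      · intro hh
        have : (i : ℕ) + 1 = (i' : ℕ) + 1 := congrArg Fin.val hh
        exact Fin.ext (by omega)
      · intro hh; rw [hh]
    rw [Matrix.mul_apply]
    simp only [Matrix.conjTranspose_apply, Matrix.smul_apply, Matrix.one_apply] at h ⊢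
    calc ∑ j, F i j * star (F i' j)
        = ∑ j, H (Fin.cast hm1 i.succ) j * star (H (Fin.cast hm1 i'.succ) j) := by
          refine Finset.sum_congr rfl fun j _ => ?_; rw [hF, hF]
      _ = (M : ℂ) • if Fin.cast hm1 i.succ = Fin.cast hm1 i'.succ then 1 else 0 := h
      _ = (M : ℂ) • if i = i' then (1 : ℂ) else 0 := by rw [if_congr hiff rfl rfl]
  -- reindexing lemma for sums over Fin M
  have hsum_split : ∀ g : Fin M → ℂ,
      ∑ j, g j = g z + ∑ i : Fin (M - 1), g (Fin.cast hm1 i.succ) := by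
    intro g
    rw [← (finCongr hm1).sum_comp g, Fin.sum_univ_succ]
    congr 1
  -- Fᴴ * F = M • 1 - J
  have hFHF : Fᴴ * F = (M : ℂ) • 1 - Matrix.of (fun _ _ => (1 : ℂ)) := by
    ext j j'
    have h := congrFun (congrFun hHorth j) j'
    rw [Matrix.mul_apply, hsum_split (fun i => Hᴴ j i * H i j')] at h
    rw [show Hᴴ j z * H z j' = 1 by
      rw [Matrix.conjTranspose_apply, hHrow, hHrow]; simp] at h
    have e1 : ∑ i, Fᴴ j i * F i j'
        = ∑ i : Fin (M - 1), Hᴴ j (Fin.cast hm1 i.succ) * H (Fin.cast hm1 i.succ) j' := by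
      refine Finset.sum_congr rfl fun i _ => ?_
      rw [Matrix.conjTranspose_apply, Matrix.conjTranspose_apply, hF, hF]
    rw [Matrix.mul_apply, e1]
    simp only [Matrix.sub_apply, Matrix.smul_apply, Matrix.one_apply, Matrix.of_apply,
      smul_eq_mul] at h ⊢
    linear_combination h
  -- column sums of X
  have hX01sq : ∀ b v, X b v * X b v = X b v := by
    intro b v; rcases hX01 b v with h | h <;> rw [h] <;> ring
  have hcol : ∀ v, ∑ b, X b v = (M : ℂ) := by
    rintro ⟨k, m⟩
    have h := congrFun (congrFun hXgram (k, m)) (k, m)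
    rw [Matrix.mul_apply] at h
    simp only [Matrix.transpose_apply, Matrix.add_apply, Matrix.smul_apply, Matrix.one_apply,
      Matrix.kroneckerMap_apply, Matrix.sub_apply, Matrix.of_apply, smul_eq_mul,
      if_pos rfl, eq_self_iff_true, if_true] at h
    calc ∑ b, X b (k, m) = ∑ b, X b (k, m) * X b (k, m) := by
          refine Finset.sum_congr rfl fun b _ => (hX01sq b (k, m)).symm
      _ = (M : ℂ) := by rw [h]; ring
  -- disjointness within groups
  have hdisj : ∀ b (k : Fin K) (m m' : Fin M), m ≠ m' → X b (k, m) * X b (k, m') = 0 := by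
    intro b k m m' hmm
    have h := congrFun (congrFun hXgram (k, m)) (k, m')
    rw [Matrix.mul_apply] at h
    simp only [Matrix.transpose_apply, Matrix.add_apply, Matrix.smul_apply, Matrix.one_apply,
      Matrix.kroneckerMap_apply, Matrix.sub_apply, Matrix.of_apply, smul_eq_mul,
      Prod.mk.injEq, hmm, and_false, if_false, eq_self_iff_true, if_true] at h
    have hsum0 : ∑ b', X b' (k, m) * X b' (k, m') = 0 := by rw [h]; ring
    have h01 : ∀ b', X b' (k, m) * X b' (k, m') = 0 ∨ X b' (k, m) * X b' (k, m') = 1 := by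
      intro b'
      rcases hX01 b' (k, m) with h1 | h1 <;> rcases hX01 b' (k, m') with h2 | h2 <;>
        simp [h1, h2]
    rw [sum01_eq_card _ h01] at hsum0
    have hcard := Nat.cast_eq_zero.mp hsum0
    rcases hX01 b (k, m) with h1 | h1
    · rw [h1]; ring
    rcases hX01 b (k, m') with h2 | h2
    · rw [h2]; ring
    exfalso
    have : b ∈ Finset.univ.filter (fun b' => X b' (k, m) * X b' (k, m') = 1) := by
      simp [h1, h2]
    rw [Finset.card_eq_zero.mp hcard] at this
    exact absurd this (Finset.notMem_empty b)
  -- each row meets each group exactly once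
  have hgroup : ∀ b (k : Fin K),
      (Finset.univ.filter (fun m => X b (k, m) = 1)).card = 1 := by
    intro b k
    set n : Fin K → ℕ := fun k => (Finset.univ.filter (fun m => X b (k, m) = 1)).card with hn
    have hle : ∀ k, n k ≤ 1 := by
      intro k
      refine Finset.card_le_one.mpr fun m hm m' hm' => ?_
      by_contra hne
      have h1 := (Finset.mem_filter.mp hm).2
      have h2 := (Finset.mem_filter.mp hm').2
      have := hdisj b k m m' hne
      rw [h1, h2] at this
      norm_num at this
    have hsum : ∑ k, n k = K := by
      have h := hXrow b
      rw [Fintype.sum_prod_type] at h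
      have : ∀ k : Fin K, ∑ m, X b (k, m) = (n k : ℂ) := by
        intro k
        exact sum01_eq_card _ (fun m => hX01 b (k, m))
      rw [Finset.sum_congr rfl (fun k _ => this k)] at h
      exact_mod_cast h
    have heq : ∀ k ∈ Finset.univ, n k = 1 := by
      refine (Finset.sum_eq_sum_iff_of_le (fun k _ => hle k)).mp ?_
      rw [hsum]
      simp
    exact heq k (Finset.mem_univ k)
  -- the unique grid point in each group
  have hpick : ∀ b (k : Fin K), ∃ m : Fin M, X b (k, m) = 1 ∧
      ∀ m', m' ≠ m → X b (k, m') = 0 := by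
    intro b k
    obtain ⟨a, ha⟩ := Finset.card_eq_one.mp (hgroup b k)
    refine ⟨a, ?_, ?_⟩
    · have : a ∈ Finset.univ.filter (fun m => X b (k, m) = 1) := by rw [ha]; simp
      exact (Finset.mem_filter.mp this).2
    · intro m' hm'
      rcases hX01 b (k, m') with h | h
      · exact h
      · exfalso
        have : m' ∈ Finset.univ.filter (fun m => X b (k, m) = 1) := by simp [h]
        rw [ha, Finset.mem_singleton] at this
        exact hm' this
  have hgroupsum : ∀ b (k : Fin K), ∑ m, X b (k, m) = 1 := by
    intro b k
    rw [sum01_eq_card _ (fun m => hX01 b (k, m)), hgroup b k]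
    norm_num
  -- entry formula for Φ
  have hentry : ∀ (k : Fin K) (i : Fin (M - 1)) b,
      Φ (k, i) b = ∑ m, F i m * X b (k, m) := by
    intro k i b
    rw [hΦ, Matrix.mul_apply, Fintype.sum_prod_type]
    simp only [Matrix.kroneckerMap_apply, Matrix.transpose_apply, Matrix.one_apply]
    rw [Finset.sum_eq_single k]
    · simp
    · intro k' _ hk'
      have hne : k ≠ k' := Ne.symm hk'
      simp [hne]
    · simp
  -- transpose of X is self-conjugate
  have hXH : (Xᵀ)ᴴ = X := by
    ext b v
    rcases hX01 b v with h | h <;>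
      simp [Matrix.conjTranspose_apply, Matrix.transpose_apply, h]
  -- F * J = 0
  have hFJ : F * (Matrix.of (fun _ _ => (1 : ℂ)) : Matrix (Fin M) (Fin M) ℂ) = 0 := by
    ext i j
    rw [Matrix.mul_apply]
    simp only [Matrix.of_apply, mul_one, Matrix.zero_apply]
    exact hFrow i
  refine ⟨?_, ?_, ?_, ?_⟩
  · -- flatness
    rintro ⟨k, i⟩ b
    obtain ⟨m, hm1', hm2⟩ := hpick b k
    have : Φ (k, i) b = F i m := by
      rw [hentry]
      rw [Finset.sum_eq_single m]
      · rw [hm1', mul_one]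
      · intro m' _ hm'; rw [hm2 m' hm', mul_zero]
      · simp
    rw [this, hF]
    exact hHflat _ _
  · -- Φ Φᴴ = M² • 1
    have expand : Φ * Φᴴ =
        Matrix.kroneckerMap (· * ·) (1 : Matrix (Fin K) (Fin K) ℂ) F * (Xᵀ * X) *
          Matrix.kroneckerMap (· * ·) (1 : Matrix (Fin K) (Fin K) ℂ) Fᴴ := by
      rw [hΦ, Matrix.conjTranspose_mul, hXH, kron_conjT, Matrix.conjTranspose_one]
      simp only [Matrix.mul_assoc]
    rw [expand, hXgram]
    rw [Matrix.mul_add, Matrix.add_mul]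
    have t1 : Matrix.kroneckerMap (· * ·) (1 : Matrix (Fin K) (Fin K) ℂ) F *
        ((M : ℂ) • (1 : Matrix (Fin K × Fin M) (Fin K × Fin M) ℂ)) *
        Matrix.kroneckerMap (· * ·) (1 : Matrix (Fin K) (Fin K) ℂ) Fᴴ =
        ((M : ℂ) ^ 2) • 1 := by
      rw [Matrix.mul_smul, Matrix.mul_one, Matrix.smul_mul,
        ← Matrix.mul_kronecker_mul, Matrix.one_mul, hFFH]
      rw [Matrix.kroneckerMap_smul_right _ _ (fun a b => mul_smul_comm _ _ _)]
      rw [Matrix.one_kronecker_one, smul_smul, sq]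
    have t2 : Matrix.kroneckerMap (· * ·) (1 : Matrix (Fin K) (Fin K) ℂ) F *
        Matrix.kroneckerMap (· * ·)
          (Matrix.of (fun _ _ => (1 : ℂ)) - (1 : Matrix (Fin K) (Fin K) ℂ))
          (Matrix.of (fun _ _ => (1 : ℂ)) : Matrix (Fin M) (Fin M) ℂ) *
        Matrix.kroneckerMap (· * ·) (1 : Matrix (Fin K) (Fin K) ℂ) Fᴴ = 0 := by
      rw [← Matrix.mul_kronecker_mul, ← Matrix.mul_kronecker_mul, Matrix.mul_one,
        Matrix.one_mul, hFJ, Matrix.zero_mul, Matrix.kronecker_zero]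
    rw [t1, t2, add_zero]
  · -- Φᴴ Φ
    have expand : Φᴴ * Φ =
        X * (Matrix.kroneckerMap (· * ·) (1 : Matrix (Fin K) (Fin K) ℂ) (Fᴴ * F)) * Xᵀ := by
      have hk2 : Matrix.kroneckerMap (· * ·) (1 : Matrix (Fin K) (Fin K) ℂ) Fᴴ *
          Matrix.kroneckerMap (· * ·) (1 : Matrix (Fin K) (Fin K) ℂ) F =
          Matrix.kroneckerMap (· * ·) (1 : Matrix (Fin K) (Fin K) ℂ) (Fᴴ * F) := by
        rw [← Matrix.mul_kronecker_mul, Matrix.one_mul]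
      rw [hΦ, Matrix.conjTranspose_mul, hXH, kron_conjT, Matrix.conjTranspose_one, ← hk2]
      simp only [Matrix.mul_assoc]
    rw [expand, hFHF]
    have hkron : Matrix.kroneckerMap (· * ·) (1 : Matrix (Fin K) (Fin K) ℂ)
        ((M : ℂ) • (1 : Matrix (Fin M) (Fin M) ℂ) - Matrix.of (fun _ _ => (1 : ℂ))) =
        (M : ℂ) • (1 : Matrix (Fin K × Fin M) (Fin K × Fin M) ℂ) -
        Matrix.kroneckerMap (· * ·) (1 : Matrix (Fin K) (Fin K) ℂ)
          (Matrix.of (fun _ _ => (1 : ℂ)) : Matrix (Fin M) (Fin M) ℂ) := by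
      ext ⟨k, m⟩ ⟨k', m'⟩
      simp only [Matrix.kroneckerMap_apply, Matrix.sub_apply, Matrix.smul_apply,
        Matrix.one_apply, Matrix.of_apply, smul_eq_mul, Prod.mk.injEq]
      by_cases h1 : k = k' <;> by_cases h2 : m = m' <;> simp [h1, h2] <;> ring
    rw [hkron, Matrix.mul_sub, Matrix.sub_mul, Matrix.mul_smul, Matrix.mul_one,
      Matrix.smul_mul]
    congr 1
    -- X * (1 ⊗ J) * Xᵀ = K • J
    have h1 : X * Matrix.kroneckerMap (· * ·) (1 : Matrix (Fin K) (Fin K) ℂ)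
        (Matrix.of (fun _ _ => (1 : ℂ)) : Matrix (Fin M) (Fin M) ℂ) =
        Matrix.of (fun _ _ => (1 : ℂ)) := by
      ext b ⟨k, m'⟩
      rw [Matrix.mul_apply, Fintype.sum_prod_type]
      simp only [Matrix.kroneckerMap_apply, Matrix.one_apply, Matrix.of_apply]
      rw [Finset.sum_eq_single k]
      · simpa using hgroupsum b k
      · intro k' _ hk'
        simp [hk']
      · simp
    have h2 : (Matrix.of (fun _ _ => (1 : ℂ)) : Matrix (Fin (M * M)) (Fin K × Fin M) ℂ) *
        Xᵀ = (K : ℂ) • (Matrix.of (fun _ _ => (1 : ℂ))) := by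
      ext b b'
      rw [Matrix.mul_apply]
      simp only [Matrix.of_apply, one_mul, Matrix.transpose_apply, Matrix.smul_apply,
        smul_eq_mul, mul_one]
      exact hXrow b'
    rw [h1, h2]
  · -- Φ 1 = 0
    funext p
    obtain ⟨k, i⟩ := p
    simp only [Matrix.mulVec, dotProduct, mul_one, Pi.zero_apply]
    calc ∑ b, Φ (k, i) b = ∑ b, ∑ m, F i m * X b (k, m) := by
          refine Finset.sum_congr rfl fun b _ => hentry k i b
      _ = ∑ m, F i m * ∑ b, X b (k, m) := by
          rw [Finset.sum_comm]
          refine Finset.sum_congr rfl fun m _ => by rw [Finset.mul_sum]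
      _ = (M : ℂ) * ∑ m, F i m := by
          rw [Finset.mul_sum]
          refine Finset.sum_congr rfl fun m _ => by rw [hcol (k, m)]; ring
      _ = 0 := by rw [hFrow i, mul_zero]
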